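/- Let G be a differentiable convex function on [0,1], 0 ≤ a ≤ b ≤ 1, and X a random variable supported on [a,b]. Then E[D_G(X ∥ E[X])] = E[G(X)] − G(E[X]) ≤ 2·JB_G(a,b). -/

import Mathlib

open MeasureTheory Set

/-- The Bregman divergence `D_G(y ∥ x) = G(y) - G(x) - (y - x) G'(x)`. -/
noncomputable def bregman (G : ℝ → ℝ) (y x : ℝ) : ℝ := G y - G x - (y - x) * deriv G x

/-- The Jensen-Bregman divergence `JB_G(a,b) = (G(a)+G(b))/2 - G((a+b)/2)`. -/
noncomputable def jensenBregman (G : ℝ → ℝ) (a b : ℝ) : ℝ :=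
  (G a + G b)/2 - G ((a + b)/2)

lemma chord_bound {G : ℝ → ℝ} {a b : ℝ} (hG : ConvexOn ℝ (Icc (0:ℝ) 1) G)
    (ha : 0 ≤ a) (hb : b ≤ 1) (hlt : a < b) {t : ℝ} (ht : t ∈ Icc a b) :
    G t ≤ ((b - t) * G a + (t - a) * G b) / (b - a) := by
  have hba : (0:ℝ) < b - a := by linarith
  have haI : a ∈ Icc (0:ℝ) 1 := ⟨ha, by linarith [ht.1, ht.2]⟩
  have hbI : b ∈ Icc (0:ℝ) 1 := ⟨by linarith, hb⟩
  have h1 : (0:ℝ) ≤ (b - t)/(b - a) := div_nonneg (by linarith [ht.2]) hba.le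
  have h2 : (0:ℝ) ≤ (t - a)/(b - a) := div_nonneg (by linarith [ht.1]) hba.le
  have h3 : (b - t)/(b - a) + (t - a)/(b - a) = 1 := by field_simp; ring
  have := hG.2 haI hbI h1 h2 h3
  simp only [smul_eq_mul] at this
  have heq : (b - t)/(b - a) * a + (t - a)/(b - a) * b = t := by
    field_simp; ring
  rw [heq] at this
  calc G t ≤ (b - t)/(b - a) * G a + (t - a)/(b - a) * G b := this
    _ = ((b - t) * G a + (t - a) * G b) / (b - a) := by ring

lemma midpoint_bound {G : ℝ → ℝ} (hG : ConvexOn ℝ (Icc (0:ℝ) 1) G)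
    {t s : ℝ} (ht : t ∈ Icc (0:ℝ) 1) (hs : s ∈ Icc (0:ℝ) 1) :
    G ((t + s)/2) ≤ (G t + G s)/2 := by
  have := hG.2 ht hs (by norm_num : (0:ℝ) ≤ 1/2) (by norm_num : (0:ℝ) ≤ 1/2) (by norm_num)
  simp only [smul_eq_mul] at this
  have heq : (1/2 : ℝ) * t + (1/2 : ℝ) * s = (t + s)/2 := by ring
  rw [heq] at this
  linarith

/-- For a random variable `X` supported on `[a,b] ⊆ [0,1]`,
`E[D_G(X ∥ E[X])] = E[G(X)] - G(E[X]) ≤ 2 JB_G(a,b)`. -/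
theorem bregman_to_mean_le_two_jensen_bregman
    {Ω : Type*} {m0 : MeasurableSpace Ω} (μ : Measure Ω) [IsProbabilityMeasure μ]
    (G : ℝ → ℝ)
    (hGdiff : ∀ x ∈ Ioo (0:ℝ) 1, DifferentiableAt ℝ G x)
    (hGconv : ConvexOn ℝ (Icc (0:ℝ) 1) G)
    (a b : ℝ) (ha : 0 ≤ a) (hab : a ≤ b) (hb : b ≤ 1)
    (X : Ω → ℝ) (hXrange : ∀ ω, X ω ∈ Icc a b)
    (hXint : Integrable X μ) (hGXint : Integrable (fun ω => G (X ω)) μ) :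
    ∫ ω, bregman G (X ω) (∫ ω', X ω' ∂μ) ∂μ
        = (∫ ω, G (X ω) ∂μ) - G (∫ ω', X ω' ∂μ) ∧
      (∫ ω, G (X ω) ∂μ) - G (∫ ω', X ω' ∂μ) ≤ 2 * jensenBregman G a b := by
  set c := ∫ ω', X ω' ∂μ with hc
  -- part 1
  have part1 : ∫ ω, bregman G (X ω) c ∂μ = (∫ ω, G (X ω) ∂μ) - G c := by
    have h1 : ∀ ω, bregman G (X ω) c
        = G (X ω) - (X ω) * deriv G c - (G c - c * deriv G c) := by
      intro ω; simp [bregman]; ring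
    have e1 : Integrable (fun ω => G (X ω) - X ω * deriv G c) μ :=
      hGXint.sub (hXint.mul_const _)
    simp only [h1]
    rw [integral_sub e1 (integrable_const _),
      integral_sub hGXint (hXint.mul_const _), integral_mul_const, integral_const]
    simp [← hc]
  refine ⟨part1, ?_⟩
  -- bounds on c
  have hca : a ≤ c := by
    calc a = ∫ _, a ∂μ := by simp
      _ ≤ c := integral_mono (integrable_const _) hXint (fun ω => (hXrange ω).1)
  have hcb : c ≤ b := by
    calc c ≤ ∫ _, b ∂μ := integral_mono hXint (integrable_const _) (fun ω => (hXrange ω).2)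
      _ = b := by simp
  rcases eq_or_lt_of_le hab with heq | hlt
  · -- a = b : everything is zero
    subst heq
    have hXc : ∀ ω, X ω = a := fun ω => le_antisymm (hXrange ω).2 (hXrange ω).1
    have hce : c = a := le_antisymm hcb hca
    have : (∫ ω, G (X ω) ∂μ) = G a := by
      simp only [hXc]; simp
    rw [this, hce]
    simp [jensenBregman]
  · -- a < b
    have hba : (0:ℝ) < b - a := by linarith
    set L : ℝ → ℝ := fun t => ((b - t) * G a + (t - a) * G b) / (b - a) with hL
    -- E[G(X)] ≤ L c
    have hint : ∫ ω, G (X ω) ∂μ ≤ L c := by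
      have hLa : ∀ t : ℝ, L t = (b * G a - a * G b)/(b - a) + t * ((G b - G a)/(b - a)) := by
        intro t; simp only [hL]; field_simp; ring
      have h1 : ∫ ω, G (X ω) ∂μ ≤ ∫ ω, L (X ω) ∂μ := by
        apply integral_mono hGXint
        · simp only [hLa]
          exact (integrable_const _).add (hXint.mul_const _)
        · exact fun ω => chord_bound hGconv ha hb hlt (hXrange ω)
      have h2 : ∫ ω, L (X ω) ∂μ = L c := by
        simp only [hLa]
        rw [integral_add (integrable_const _) (hXint.mul_const _), integral_mul_const,
          integral_const]
        simp [← hc]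
      linarith
    -- L c - G c ≤ 2 * JB
    have hmain : L c - G c ≤ 2 * jensenBregman G a b := by
      set s := a + b - c with hs
      have hsmem : s ∈ Icc a b := ⟨by simp [hs]; linarith, by simp [hs]; linarith⟩
      have hcI : c ∈ Icc (0:ℝ) 1 := ⟨by linarith, by linarith⟩
      have hsI : s ∈ Icc (0:ℝ) 1 := ⟨by linarith [hsmem.1], by linarith [hsmem.2]⟩
      have hmid : G ((a + b)/2) ≤ (G c + G s)/2 := by
        have := midpoint_bound hGconv hcI hsI
        have hcs : (c + s)/2 = (a + b)/2 := by simp [hs]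
        rwa [hcs] at this
      have hGs : G s ≤ L s := chord_bound hGconv ha hb hlt hsmem
      have hLm : L c + L s = G a + G b := by
        simp only [hL, hs]; field_simp; ring
      simp only [jensenBregman]
      linarith
    linarith
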